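/- Let U be an open set in ℝⁿ and let Φ be an interval function on U (a real-valued function on closed axis-parallel boxes contained in U that is additive over finite partitions of a box into boxes with pairwise disjoint interiors). If the lower density D_Φ(x) = liminf_{x ∈ Q, δ(Q)→0} Φ(Q)/m(Q) (liminf over boxes Q ⊂ U containing x with diameter δ(Q) tending to 0) is finite at every point of U and is locally Lebesgue integrable on U, then for every box Q ⊂ U one has Φ(Q) ≥ ∫_Q D_Φ(x) dx. -/

import Mathlib

open MeasureTheory

/-- A (nondegenerate) closed axis-parallel box in `ℝⁿ`. -/
def IsBox {n : ℕ} (Q : Set (Fin n → ℝ)) : Prop :=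
  ∃ a b : Fin n → ℝ, (∀ i, a i < b i) ∧ Q = Set.Icc a b

/-- A finite partition of a box into boxes with pairwise disjoint interiors. -/
def IsBoxPartition {n : ℕ} (Q : Set (Fin n → ℝ)) {m : ℕ}
    (P : Fin m → Set (Fin n → ℝ)) : Prop :=
  (∀ i, IsBox (P i)) ∧ (⋃ i, P i) = Q ∧
    Pairwise fun i j => Disjoint (interior (P i)) (interior (P j))

/-- An interval function on an open set `U`: a real-valued function on closed axis-parallel
boxes contained in `U` that is additive over finite partitions of a box into boxes with
pairwise disjoint interiors. -/
def IsIntervalFunction {n : ℕ} (U : Set (Fin n → ℝ)) (Φ : Set (Fin n → ℝ) → ℝ) : Prop :=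
  ∀ Q : Set (Fin n → ℝ), IsBox Q → Q ⊆ U →
    ∀ (m : ℕ) (P : Fin m → Set (Fin n → ℝ)), IsBoxPartition Q P →
      Φ Q = ∑ i, Φ (P i)

/-- The upper density of an interval function at a point:
`limsup_{x ∈ Q, δ(Q) → 0} Φ(Q)/m(Q) = inf_{ε>0} sup {Φ(Q)/m(Q) : x ∈ Q ⊆ U, δ(Q) ≤ ε}`,
with values in `[-∞, +∞]`. -/
noncomputable def upperDensity {n : ℕ} (U : Set (Fin n → ℝ)) (Φ : Set (Fin n → ℝ) → ℝ)
    (x : Fin n → ℝ) : EReal :=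
  ⨅ (ε : ℝ) (_ : 0 < ε),
    ⨆ (Q : Set (Fin n → ℝ)) (_ : IsBox Q ∧ x ∈ Q ∧ Q ⊆ U ∧ Metric.diam Q ≤ ε),
      ((Φ Q / (volume Q).toReal : ℝ) : EReal)

/-- The lower density of an interval function at a point:
`liminf_{x ∈ Q, δ(Q) → 0} Φ(Q)/m(Q) = sup_{ε>0} inf {Φ(Q)/m(Q) : x ∈ Q ⊆ U, δ(Q) ≤ ε}`,
with values in `[-∞, +∞]`. -/
noncomputable def lowerDensity {n : ℕ} (U : Set (Fin n → ℝ)) (Φ : Set (Fin n → ℝ) → ℝ)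
    (x : Fin n → ℝ) : EReal :=
  ⨆ (ε : ℝ) (_ : 0 < ε),
    ⨅ (Q : Set (Fin n → ℝ)) (_ : IsBox Q ∧ x ∈ Q ∧ Q ⊆ U ∧ Metric.diam Q ≤ ε),
      ((Φ Q / (volume Q).toReal : ℝ) : EReal)

/-- `Φ` has finite density `L` at `x` (relative to `U`): `Φ(Q)/m(Q) → L` as boxes
`Q ⊆ U` containing `x` have diameter tending to `0`. -/
def HasBoxDensityAt {n : ℕ} (U : Set (Fin n → ℝ)) (Φ : Set (Fin n → ℝ) → ℝ)
    (L : ℝ) (x : Fin n → ℝ) : Prop :=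
  ∀ ε > 0, ∃ τ > 0, ∀ Q : Set (Fin n → ℝ), IsBox Q → x ∈ Q → Q ⊆ U →
    Metric.diam Q ≤ τ → |Φ Q / (volume Q).toReal - L| ≤ ε

section Aux

open BoxIntegral

lemma IsBox.volume_toReal_pos {n : ℕ} {S : Set (Fin n → ℝ)} (hS : IsBox S) :
    0 < (volume S).toReal := by
  obtain ⟨c, d, hcd, rfl⟩ := hS
  rw [Real.volume_Icc_pi_toReal (fun i => (hcd i).le)]
  exact Finset.prod_pos fun i _ => sub_pos.2 (hcd i)

lemma lowerDensity_bound {n : ℕ} {U : Set (Fin n → ℝ)} {Φ : Set (Fin n → ℝ) → ℝ}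
    {D : (Fin n → ℝ) → ℝ} {x : Fin n → ℝ}
    (hx : lowerDensity U Φ x = (D x : EReal)) {ε : ℝ} (hε : 0 < ε) :
    ∃ τ > 0, ∀ S : Set (Fin n → ℝ), IsBox S → x ∈ S → S ⊆ U → Metric.diam S ≤ τ →
      (D x - ε) * (volume S).toReal ≤ Φ S := by
  have h1 : ((D x - ε : ℝ) : EReal) < lowerDensity U Φ x := by
    rw [hx]; exact_mod_cast sub_lt_self _ hε
  rw [lowerDensity, lt_iSup_iff] at h1
  obtain ⟨τ, h1⟩ := h1
  rw [lt_iSup_iff] at h1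
  obtain ⟨hτ, h1⟩ := h1
  refine ⟨τ, hτ, fun S hS hxS hSU hdiam => ?_⟩
  have h2 : ((D x - ε : ℝ) : EReal) < ((Φ S / (volume S).toReal : ℝ) : EReal) :=
    h1.trans_le (iInf₂_le S ⟨hS, hxS, hSU, hdiam⟩)
  have h3 : D x - ε < Φ S / (volume S).toReal := by exact_mod_cast h2
  exact le_of_lt ((lt_div_iff₀ hS.volume_toReal_pos).1 h3)

lemma Box.isBox_Icc {n : ℕ} (J : Box (Fin n)) : IsBox (Box.Icc J) :=
  ⟨J.lower, J.upper, J.lower_lt_upper, rfl⟩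

lemma box_closure_coe {n : ℕ} (I : Box (Fin n)) :
    closure (I : Set (Fin n → ℝ)) = Box.Icc I := by
  rw [Box.coe_eq_pi, closure_pi_set, Box.Icc_eq_pi]
  refine Set.pi_congr rfl fun i _ => ?_
  exact closure_Ioc (I.lower_lt_upper i).ne

lemma box_interior_Icc_subset {n : ℕ} (J : Box (Fin n)) :
    interior (Box.Icc J) ⊆ (J : Set (Fin n → ℝ)) := by
  rw [Box.Icc_eq_pi, interior_pi_set Set.finite_univ, Box.coe_eq_pi]
  refine Set.pi_mono fun i _ => ?_
  rw [interior_Icc]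
  exact Set.Ioo_subset_Ioc_self

lemma taggedPartition_isBoxPartition {n : ℕ} {I : Box (Fin n)}
    (π : TaggedPrepartition I) (hP : π.IsPartition) :
    IsBoxPartition (Box.Icc I)
      (fun i : Fin π.boxes.card => Box.Icc (π.boxes.equivFin.symm i : Box (Fin n))) := by
  set e := π.boxes.equivFin
  refine ⟨fun i => Box.isBox_Icc _, ?_, ?_⟩
  · apply Set.Subset.antisymm
    · exact Set.iUnion_subset fun i =>
        Box.le_iff_Icc.1 (π.le_of_mem' _ (e.symm i).2)
    · have hclosed : IsClosed (⋃ i, Box.Icc (e.symm i : Box (Fin n))) :=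
        isClosed_iUnion_of_finite fun i => isClosed_Icc
      have hsub : (I : Set (Fin n → ℝ)) ⊆ ⋃ i, Box.Icc (e.symm i : Box (Fin n)) := by
        intro x hx
        obtain ⟨J, hJ, hxJ⟩ := hP x hx
        refine Set.mem_iUnion.2 ⟨e ⟨J, hJ⟩, ?_⟩
        simpa using Box.coe_subset_Icc hxJ
      rw [← box_closure_coe I]
      exact hclosed.closure_subset_iff.2 hsub
  · intro i j hij
    have hne : ((e.symm i : Box (Fin n))) ≠ ((e.symm j : Box (Fin n))) := by
      intro h
      exact hij (e.symm.injective (Subtype.coe_injective h))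
    have hdisj : Disjoint ((e.symm i : Box (Fin n)) : Set (Fin n → ℝ))
        ((e.symm j : Box (Fin n)) : Set (Fin n → ℝ)) :=
      π.toPrepartition.pairwiseDisjoint (Finset.mem_coe.2 (e.symm i).2)
        (Finset.mem_coe.2 (e.symm j).2) hne
    exact hdisj.mono (box_interior_Icc_subset _) (box_interior_Icc_subset _)

end Aux

/-- **Theorem (lower-density inequality).** If an interval function Φ on an open set
`U ⊆ ℝⁿ` has a finite lower density `D_Φ(x) = D x` at every point of `U`, and `D` is
locally Lebesgue integrable on `U`, then `Φ(Q) ≥ ∫_Q D_Φ(x) dx` for every box `Q ⊆ U`. -/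
theorem intervalFunction_ge_integral_lowerDensity {n : ℕ}
    (U : Set (Fin n → ℝ)) (hU : IsOpen U)
    (Φ : Set (Fin n → ℝ) → ℝ) (hΦ : IsIntervalFunction U Φ)
    (D : (Fin n → ℝ) → ℝ)
    (hfin : ∀ x ∈ U, lowerDensity U Φ x = (D x : EReal))
    (hloc : LocallyIntegrableOn D U volume) :
    ∀ Q : Set (Fin n → ℝ), IsBox Q → Q ⊆ U → ∫ x in Q, D x ≤ Φ Q := by
  classical
  rintro Q hQbox hQU
  obtain ⟨a, b, hab, rfl⟩ := hQbox
  set I : BoxIntegral.Box (Fin n) := ⟨a, b, hab⟩ with hIdef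
  have hIcc : BoxIntegral.Box.Icc I = Set.Icc a b := rfl
  have hD : IntegrableOn D (Set.Icc a b) volume :=
    hloc.integrableOn_compact_subset hQU isCompact_Icc
  have hDI : IntegrableOn D (I : Set (Fin n → ℝ)) volume :=
    hD.mono_set (hIcc ▸ BoxIntegral.Box.coe_subset_Icc)
  have hint : ∫ x in (I : Set (Fin n → ℝ)), D x = ∫ x in Set.Icc a b, D x :=
    setIntegral_congr_set (hIcc ▸ I.coe_ae_eq_Icc)
  have hbox := hDI.hasBoxIntegral BoxIntegral.IntegrationParams.Henstock rfl
  refine le_of_forall_pos_le_add fun ε hε => ?_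
  set V : ℝ := (volume (Set.Icc a b)).toReal with hVdef
  have hV : 0 < 1 + V := by positivity
  set ε' : ℝ := ε / (1 + V) with hε'def
  have hε' : 0 < ε' := div_pos hε hV
  obtain ⟨r₀, -, H⟩ := (BoxIntegral.hasIntegral_iff.1 hbox) ε' hε'
  have h1 : ∀ x : Fin n → ℝ, ∃ τ : ℝ, 0 < τ ∧ (x ∈ U →
      Metric.closedBall x (2 * τ) ⊆ U ∧
      ∀ S, IsBox S → x ∈ S → S ⊆ U → Metric.diam S ≤ 2 * τ →
        (D x - ε') * (volume S).toReal ≤ Φ S) := by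
    intro x
    by_cases hx : x ∈ U
    · obtain ⟨τ, hτ0, hτ⟩ := lowerDensity_bound (hfin x hx) hε'
      obtain ⟨ρ, hρ0, hρ⟩ := Metric.isOpen_iff.1 hU x hx
      refine ⟨min (τ / 2) (ρ / 4), by positivity, fun _ => ⟨?_, ?_⟩⟩
      · refine (Metric.closedBall_subset_ball ?_).trans hρ
        have h := min_le_right (τ / 2) (ρ / 4)
        linarith
      · intro S hS h2 h3 h4
        refine hτ S hS h2 h3 (h4.trans ?_)
        have h := min_le_left (τ / 2) (ρ / 4)
        linarith
    · exact ⟨1, one_pos, fun h => absurd h hx⟩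
  choose τ hτ0 hτ using h1
  set r : (Fin n → ℝ) → Set.Ioi (0 : ℝ) :=
    fun x => ⟨min (τ x) (r₀ 1 x), lt_min (hτ0 x) (r₀ 1 x).2⟩ with hrdef
  obtain ⟨π, hπP, hπH, hπr, -, -⟩ :=
    BoxIntegral.Box.exists_taggedPartition_isHenstock_isSubordinate_homothetic I r
  have hmem : BoxIntegral.IntegrationParams.Henstock.MemBaseSet I 1 (r₀ 1) π :=
    ⟨hπr.mono fun x _ => Subtype.coe_le_coe.1 (min_le_right _ _), fun _ => hπH,
     fun h => by simp [BoxIntegral.IntegrationParams.Henstock] at h,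
     fun h => by simp [BoxIntegral.IntegrationParams.Henstock] at h⟩
  have hdist := H 1 π hmem hπP
  have hkey : ∀ J ∈ π.boxes,
      (D (π.tag J) - ε') * (volume.toBoxAdditive J) ≤ Φ (BoxIntegral.Box.Icc J) := by
    intro J hJ
    have hxU : π.tag J ∈ U := hQU (hIcc ▸ π.tag_mem_Icc J)
    obtain ⟨hball, hbound⟩ := hτ (π.tag J) hxU
    have hrle : (r (π.tag J) : ℝ) ≤ τ (π.tag J) := min_le_left _ _
    have hsubU : BoxIntegral.Box.Icc J ⊆ U := by
      refine (hπr J hJ).trans ((Metric.closedBall_subset_closedBall ?_).trans hball)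
      have := hτ0 (π.tag J); linarith
    have hdiam : Metric.diam (BoxIntegral.Box.Icc J) ≤ 2 * τ (π.tag J) := by
      refine (hπr.diam_le hJ).trans ?_
      linarith
    have hb := hbound (BoxIntegral.Box.Icc J) (Box.isBox_Icc J) (hπH J hJ) hsubU hdiam
    rwa [show (volume (BoxIntegral.Box.Icc J)).toReal = volume.toBoxAdditive J by
      rw [Measure.toBoxAdditive_apply, measureReal_def, measure_congr J.coe_ae_eq_Icc]] at hb
  have hΦeq : Φ (Set.Icc a b) = ∑ J ∈ π.boxes, Φ (BoxIntegral.Box.Icc J) := by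
    have hpart := taggedPartition_isBoxPartition π hπP
    have heq := hΦ (Set.Icc a b) ⟨a, b, hab, rfl⟩ hQU π.boxes.card
      (fun i : Fin π.boxes.card =>
        BoxIntegral.Box.Icc (π.boxes.equivFin.symm i : BoxIntegral.Box (Fin n)))
      (hIcc ▸ hpart)
    rw [heq, ← Finset.sum_coe_sort π.boxes (fun J => Φ (BoxIntegral.Box.Icc J))]
    exact Equiv.sum_comp π.boxes.equivFin.symm
      (fun J : ↥π.boxes => Φ (BoxIntegral.Box.Icc (J : BoxIntegral.Box (Fin n))))
  have hsum : ∑ J ∈ π.boxes, (D (π.tag J) - ε') * volume.toBoxAdditive J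
      ≤ Φ (Set.Icc a b) := by
    rw [hΦeq]; exact Finset.sum_le_sum hkey
  have hvtot : ∑ J ∈ π.boxes, volume.toBoxAdditive J = V := by
    rw [volume.toBoxAdditive.sum_partition_boxes le_top hπP,
      Measure.toBoxAdditive_apply, measureReal_def, measure_congr I.coe_ae_eq_Icc, hIcc]
  have hisum : BoxIntegral.integralSum D volume.toBoxAdditive.toSMul π
      = ∑ J ∈ π.boxes, volume.toBoxAdditive J * D (π.tag J) := by
    simp [BoxIntegral.integralSum, BoxIntegral.BoxAdditiveMap.toSMul_apply, smul_eq_mul]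
  have hexp : ∑ J ∈ π.boxes, (D (π.tag J) - ε') * volume.toBoxAdditive J
      = BoxIntegral.integralSum D volume.toBoxAdditive.toSMul π - ε' * V := by
    rw [hisum, ← hvtot, Finset.mul_sum, ← Finset.sum_sub_distrib]
    exact Finset.sum_congr rfl fun J _ => by ring
  have habs : |BoxIntegral.integralSum D volume.toBoxAdditive.toSMul π
      - ∫ x in (I : Set (Fin n → ℝ)), D x| ≤ ε' := by
    rw [← Real.dist_eq]; exact hdist
  have h5 := abs_le.1 habs
  have hεeq : ε' * (1 + V) = ε := div_mul_cancel₀ ε hV.ne'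
  have : ∫ x in Set.Icc a b, D x
      ≤ Φ (Set.Icc a b) + ε' * (1 + V) := by
    rw [← hint]
    nlinarith [hsum, hexp, h5.1, h5.2]
  linarith [this, hεeq ▸ this]
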